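/- Let X be a real Banach space with a normalized 1-symmetric basis (e_i)_{i∈ℕ} with biorthogonal functionals (e*_i)_{i∈ℕ}, and let x ∈ S_X. Then: (1) if M(x) contains an infinite set, then M(x) = {supp(x)}, where supp(x) = {i ∈ ℕ : e*_i(x) ≠ 0}; (2) if every member of M(x) is finite, then any A, B ∈ M(x) satisfy |A| = |B| and the function i ↦ |e*_i(x)| is constant on the symmetric difference A △ B. -/

import Mathlib

noncomputable section

variable {X : Type*} [NormedAddCommGroup X] [NormedSpace ℝ X]

/-- `(e, f)` is a normalized 1-unconditional basis of `X` with biorthogonal functionals `f`. -/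
structure IsUncondBasis (e : ℕ → X) (f : ℕ → X →L[ℝ] ℝ) : Prop where
  norm_e : ∀ i, ‖e i‖ = 1
  biorth : ∀ i j, f i (e j) = if i = j then (1 : ℝ) else 0
  expand : ∀ x : X, HasSum (fun i => f i x • e i) x
  signs : ∀ (x : X) (θ : ℕ → ℝ), (∀ i, θ i = 1 ∨ θ i = -1) →
    ∃ y : X, HasSum (fun i => θ i • f i x • e i) y ∧ ‖y‖ = ‖x‖

/-- `(e, f)` is a normalized 1-symmetric basis: a 1-unconditional basis such that moreover
permuting the coefficients of any `x` by any permutation of `ℕ` (with any choice of signs)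
gives a summable family whose sum has the same norm as `x`. -/
structure IsSymmetricBasis (e : ℕ → X) (f : ℕ → X →L[ℝ] ℝ)
    extends IsUncondBasis e f : Prop where
  symm : ∀ (x : X) (θ : ℕ → ℝ) (π : Equiv.Perm ℕ), (∀ i, θ i = 1 ∨ θ i = -1) →
    ∃ y : X, HasSum (fun i => θ i • f i x • e (π i)) y ∧ ‖y‖ = ‖x‖

/-- The projection `P_A x = ∑_{i ∈ A} f i x • e i`. -/
def basisProj (e : ℕ → X) (f : ℕ → X →L[ℝ] ℝ) (A : Set ℕ) (x : X) : X :=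
  ∑' i : A, f i x • e i

/-- The family `M(x)` of minimal norm-giving subsets of the support of `x`. -/
def Mset (e : ℕ → X) (f : ℕ → X →L[ℝ] ℝ) (x : X) : Set (Set ℕ) :=
  {A | ‖basisProj e f A x‖ = ‖x‖ ∧ ∀ i ∈ A, ‖basisProj e f A x - f i x • e i‖ < ‖x‖}

namespace MsetAux

open Set
open scoped Classical

variable [CompleteSpace X] {e : ℕ → X} {f : ℕ → X →L[ℝ] ℝ}

lemma hasSum_proj (hu : IsUncondBasis e f) (A : Set ℕ) (x : X) :
    HasSum (A.indicator fun i => f i x • e i) (basisProj e f A x) := by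
  have hs : Summable (A.indicator fun i => f i x • e i) :=
    (hu.expand x).summable.indicator A
  have := hs.hasSum
  rwa [basisProj, tsum_subtype A (fun i => f i x • e i)]

lemma coef_proj (hu : IsUncondBasis e f) (A : Set ℕ) (x : X) (j : ℕ) :
    f j (basisProj e f A x) = if j ∈ A then f j x else 0 := by
  classical
  have h1 : HasSum (fun i => f j (A.indicator (fun i => f i x • e i) i))
      (f j (basisProj e f A x)) := (f j).hasSum (hasSum_proj hu A x)
  have h2 : (fun i => f j (A.indicator (fun i => f i x • e i) i)) =
      fun i => if i = j then (if j ∈ A then f j x else 0) else 0 := by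
    funext i
    by_cases hiA : i ∈ A
    · simp only [indicator_of_mem hiA, map_smul, hu.biorth j i, smul_eq_mul]
      by_cases hij : i = j
      · subst hij; simp [hiA]
      · simp [hij, Ne.symm hij]
    · simp only [indicator_of_notMem hiA, map_zero]
      by_cases hij : i = j
      · subst hij; simp [hiA]
      · simp [hij]
  rw [h2] at h1
  exact h1.unique (hasSum_ite_eq j _)

lemma norm_proj_le (hu : IsUncondBasis e f) (A : Set ℕ) (x : X) :
    ‖basisProj e f A x‖ ≤ ‖x‖ := by
  classical
  set θ : ℕ → ℝ := fun i => if i ∈ A then 1 else -1 with hθdef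
  have hθ : ∀ i, θ i = 1 ∨ θ i = -1 := by
    intro i; by_cases h : i ∈ A <;> simp [hθdef, h]
  obtain ⟨y, hy, hny⟩ := hu.signs x θ hθ
  have hsum : HasSum (fun i => (2:ℝ)⁻¹ • (f i x • e i + θ i • f i x • e i))
      ((2:ℝ)⁻¹ • (x + y)) := (((hu.expand x).add hy)).const_smul _
  have heq : (fun i => (2:ℝ)⁻¹ • (f i x • e i + θ i • f i x • e i)) =
      A.indicator fun i => f i x • e i := by
    funext i
    by_cases h : i ∈ A
    · simp only [hθdef, if_pos h, one_smul, indicator_of_mem h, smul_add]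
      module
    · simp [hθdef, if_neg h, indicator_of_notMem h]
  rw [heq] at hsum
  have := (hasSum_proj hu A x).unique hsum
  rw [this]
  calc ‖(2:ℝ)⁻¹ • (x + y)‖ = 2⁻¹ * ‖x + y‖ := by
        rw [norm_smul]; norm_num
    _ ≤ 2⁻¹ * (‖x‖ + ‖y‖) := by
        have := norm_add_le x y; nlinarith
    _ = ‖x‖ := by rw [hny]; ring

lemma proj_proj (hu : IsUncondBasis e f) {A B : Set ℕ} (hAB : A ⊆ B) (x : X) :
    basisProj e f A (basisProj e f B x) = basisProj e f A x := by
  unfold basisProj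
  refine tsum_congr fun i => ?_
  rw [show (∑' (i : ↑B), f ↑i x • e ↑i) = basisProj e f B x from rfl,
    coef_proj hu B x i, if_pos (hAB i.2)]

lemma norm_proj_mono (hu : IsUncondBasis e f) {A B : Set ℕ} (hAB : A ⊆ B) (x : X) :
    ‖basisProj e f A x‖ ≤ ‖basisProj e f B x‖ := by
  rw [← proj_proj hu hAB x]
  exact norm_proj_le hu A _

lemma proj_split (hu : IsUncondBasis e f) {A : Set ℕ} {j : ℕ} (hj : j ∈ A) (x : X) :
    basisProj e f A x = basisProj e f (A \ {j}) x + f j x • e j := by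
  classical
  have h1 : HasSum ((A \ {j}).indicator (fun i => f i x • e i) +
      fun i => if i = j then f j x • e j else 0)
      (basisProj e f (A \ {j}) x + f j x • e j) :=
    (hasSum_proj hu (A \ {j}) x).add (hasSum_ite_eq j _)
  have heq : ((A \ {j}).indicator (fun i => f i x • e i) +
      fun i => if i = j then f j x • e j else 0) =
      A.indicator fun i => f i x • e i := by
    funext i
    by_cases hij : i = j
    · subst hij
      simp [indicator_of_notMem (fun h : i ∈ A \ {i} => h.2 rfl), indicator_of_mem hj]
    · by_cases hiA : i ∈ A
      · simp [indicator_of_mem (show i ∈ A \ {j} from ⟨hiA, hij⟩), indicator_of_mem hiA, hij]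
      · simp [indicator_of_notMem (fun h : i ∈ A \ {j} => hiA h.1),
          indicator_of_notMem hiA, hij]
  rw [heq] at h1
  exact ((hasSum_proj hu A x).unique h1)

set_option linter.unusedSectionVars false in
lemma mem_support_of_mem (hu : IsUncondBasis e f) {A : Set ℕ} {x : X}
    (hA : A ∈ Mset e f x) {i : ℕ} (hi : i ∈ A) : f i x ≠ 0 := by
  intro h0
  have := hA.2 i hi
  rw [h0] at this
  simp only [zero_smul, sub_zero] at this
  rw [hA.1] at this
  exact lt_irrefl _ this


lemma norm_swap (hb : IsSymmetricBasis e f) {D : Set ℕ} {i j : ℕ}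
    (hiD : i ∉ D) (hjD : j ∉ D) (hij : i ≠ j) (x : X) (t θi : ℝ)
    (hθi : θi = 1 ∨ θi = -1) :
    ‖basisProj e f D x + t • e i‖ = ‖basisProj e f D x + (θi * t) • e j‖ := by
  set z := basisProj e f D x + t • e i with hz
  have hcoef : ∀ k, f k z = (if k ∈ D then f k x else 0) + t * (if k = i then 1 else 0) := by
    intro k
    rw [hz, map_add, coef_proj hb.toIsUncondBasis D x k, map_smul, hb.biorth k i, smul_eq_mul]
  set θ : ℕ → ℝ := fun k => if k = i then θi else 1 with hθdef
  have hθ : ∀ k, θ k = 1 ∨ θ k = -1 := by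
    intro k; by_cases h : k = i
    · simpa [hθdef, h] using hθi
    · simp [hθdef, h]
  obtain ⟨y, hy, hny⟩ := hb.symm z θ (Equiv.swap i j) hθ
  have heq : (fun k => θ k • f k z • e (Equiv.swap i j k)) =
      D.indicator (fun m => f m x • e m) + fun k => if k = i then (θi * t) • e j else 0 := by
    funext k
    by_cases hki : k = i
    · subst hki
      simp only [hθdef, if_pos rfl, hcoef k, if_neg hiD, Equiv.swap_apply_left,
        Pi.add_apply, indicator_of_notMem hiD, zero_add, mul_one, smul_smul,
        if_true, mul_assoc]
    · by_cases hkj : k = j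
      · subst hkj
        simp only [hcoef k, if_neg hjD, if_neg hki, Pi.add_apply,
          indicator_of_notMem hjD, mul_zero, add_zero, zero_smul, smul_zero, zero_add]
      · have hsw : Equiv.swap i j k = k := Equiv.swap_apply_of_ne_of_ne hki hkj
        by_cases hkD : k ∈ D
        · simp [hθdef, hki, hsw, hcoef k, hkD, indicator_of_mem hkD]
        · simp [hθdef, hki, hsw, hcoef k, hkD, indicator_of_notMem hkD]
  rw [heq] at hy
  have h2 : HasSum (D.indicator (fun m => f m x • e m) +
      fun k => if k = i then (θi * t) • e j else 0)
      (basisProj e f D x + (θi * t) • e j) :=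
    (hasSum_proj hb.toIsUncondBasis D x).add (hasSum_ite_eq i _)
  rw [hy.unique h2] at hny
  exact hny.symm

lemma abs_coef_le (hb : IsSymmetricBasis e f) {A : Set ℕ} {x : X}
    (hA : A ∈ Mset e f x) {i j : ℕ} (hi : i ∈ A) (hj : j ∉ A) :
    |f j x| ≤ |f i x| := by
  by_contra hlt
  push_neg at hlt
  have hfi : f i x ≠ 0 := mem_support_of_mem hb.toIsUncondBasis hA hi
  have hfj : f j x ≠ 0 := by
    intro h; rw [h, abs_zero] at hlt; exact absurd hlt (not_lt.2 (abs_nonneg _))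
  set D := A \ {i} with hD
  have hiD : i ∉ D := fun h => h.2 rfl
  have hjD : j ∉ D := fun h => hj h.1
  have hij : i ≠ j := fun h => hj (h ▸ hi)
  set v := basisProj e f D x with hv
  have hsplit := proj_split hb.toIsUncondBasis hi x
  have hvlt : ‖v‖ < ‖x‖ := by
    have := hA.2 i hi
    rwa [hsplit, add_sub_cancel_right] at this
  have hnorm1 : ‖v + f i x • e i‖ = ‖x‖ := by rw [← hsplit]; exact hA.1
  set a := f i x with ha
  set t := |f j x| with ht
  set s := (t / |a|) * a with hs
  have hat : |a| < t := hlt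
  have ha0 : (0:ℝ) < |a| := abs_pos.2 hfi
  have ht0 : (0:ℝ) < t := lt_trans ha0 hat
  have habs_s : |s| = t := by
    rw [hs, abs_mul, abs_of_pos (div_pos ht0 ha0), div_mul_cancel₀ _ (ne_of_gt ha0)]
  -- choose the sign θi so that θi * s = f j x
  have hcases : f j x = s ∨ f j x = -s := by
    rcases abs_eq_abs.1 (habs_s.trans ht) with h | h
    · exact Or.inl h.symm
    · right; rw [h]; ring
  obtain ⟨θi, hθi, hθis⟩ : ∃ θi : ℝ, (θi = 1 ∨ θi = -1) ∧ θi * s = f j x := by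
    rcases hcases with h | h
    · exact ⟨1, Or.inl rfl, by rw [one_mul, h]⟩
    · exact ⟨-1, Or.inr rfl, by rw [h]; ring⟩
  -- norm of v + s • e i is at most ‖x‖
  have hsle : ‖v + s • e i‖ ≤ ‖x‖ := by
    have h1 := norm_swap hb hiD hjD hij x s θi hθi
    rw [hθis] at h1
    have h2 : basisProj e f D x + f j x • e j = basisProj e f (insert j D) x := by
      have hmem : j ∈ insert j D := mem_insert j D
      have := proj_split hb.toIsUncondBasis hmem x
      rw [Set.insert_diff_self_of_notMem hjD] at this
      exact this.symm
    rw [h1, h2]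
    exact norm_proj_le hb.toIsUncondBasis _ x
  -- convexity along the segment from v to v + s • e i
  set lam := |a| / t with hlam
  have hlam0 : 0 < lam := div_pos ha0 ht0
  have hlam1 : lam < 1 := (div_lt_one ht0).2 hat
  have hkey : v + a • e i = lam • (v + s • e i) + (1 - lam) • v := by
    have hls : lam * s = a := by
      rw [hlam, hs]; field_simp
    rw [smul_add, smul_smul, hls]
    module
  have : ‖x‖ < ‖x‖ := by
    calc ‖x‖ = ‖v + a • e i‖ := hnorm1.symm
      _ = ‖lam • (v + s • e i) + (1 - lam) • v‖ := by rw [hkey]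
      _ ≤ lam * ‖v + s • e i‖ + (1 - lam) * ‖v‖ := by
          refine le_trans (norm_add_le _ _) ?_
          rw [norm_smul, norm_smul, Real.norm_eq_abs, Real.norm_eq_abs,
            abs_of_pos hlam0, abs_of_pos (by linarith : (0:ℝ) < 1 - lam)]
      _ < lam * ‖x‖ + (1 - lam) * ‖x‖ := by nlinarith
      _ = ‖x‖ := by ring
  exact lt_irrefl _ this

lemma norm_swap_eq (hb : IsSymmetricBasis e f) {C : Set ℕ} {i j : ℕ} {x : X}
    (hiC : i ∈ C) (hjC : j ∉ C) (habs : |f i x| = |f j x|) :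
    ‖basisProj e f (insert j (C \ {i})) x‖ = ‖basisProj e f C x‖ := by
  have hij : i ≠ j := fun h => hjC (h ▸ hiC)
  have hiD : i ∉ C \ {i} := fun h => h.2 rfl
  have hjD : j ∉ C \ {i} := fun h => hjC h.1
  obtain ⟨θi, hθi, hθis⟩ : ∃ θi : ℝ, (θi = 1 ∨ θi = -1) ∧ θi * f i x = f j x := by
    rcases abs_eq_abs.1 habs with h | h
    · exact ⟨1, Or.inl rfl, by rw [one_mul, h]⟩
    · exact ⟨-1, Or.inr rfl, by rw [h]; ring⟩
  have h1 := norm_swap hb hiD hjD hij x (f i x) θi hθi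
  rw [hθis] at h1
  have h2 : basisProj e f C x = basisProj e f (C \ {i}) x + f i x • e i :=
    proj_split hb.toIsUncondBasis hiC x
  have h3 : basisProj e f (insert j (C \ {i})) x =
      basisProj e f (C \ {i}) x + f j x • e j := by
    have := proj_split hb.toIsUncondBasis (mem_insert j (C \ {i})) x
    rwa [Set.insert_diff_self_of_notMem hjD] at this
  rw [h2, h3, h1]

lemma not_ssubset (hu : IsUncondBasis e f) {B C : Set ℕ} {x : X}
    (hB : B ∈ Mset e f x) (hC : ‖basisProj e f C x‖ = ‖x‖)
    (hCB : C ⊆ B) (hne : C ≠ B) : False := by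
  obtain ⟨j, hjB, hjC⟩ : ∃ j, j ∈ B ∧ j ∉ C := by
    by_contra h
    push_neg at h
    exact hne (subset_antisymm hCB h)
  have hsub : C ⊆ B \ {j} := fun k hk => ⟨hCB hk, fun h => hjC (h ▸ hk)⟩
  have h1 : ‖x‖ ≤ ‖basisProj e f (B \ {j}) x‖ := hC ▸ norm_proj_mono hu hsub x
  have h2 : ‖basisProj e f (B \ {j}) x‖ < ‖x‖ := by
    have := hB.2 j hjB
    rwa [proj_split hu hjB x, add_sub_cancel_right] at this
  linarith

lemma card_diff_le (hb : IsSymmetricBasis e f) {A B : Set ℕ} {x : X}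
    (hA : A ∈ Mset e f x) (hB : B ∈ Mset e f x)
    (hAf : A.Finite) (hBf : B.Finite) : (B \ A).ncard ≤ (A \ B).ncard := by
  by_contra hlt
  push_neg at hlt
  have hconst : ∀ i ∈ A \ B, ∀ j ∈ B \ A, |f i x| = |f j x| := fun i hi j hj =>
    le_antisymm (abs_coef_le hb hB hj.1 hi.2) (abs_coef_le hb hA hi.1 hj.2)
  have main : ∀ n (C : Set ℕ), ‖basisProj e f C x‖ = ‖x‖ → C \ B ⊆ A \ B →
      B \ C ⊆ B \ A → (C \ B).ncard = n → n < (B \ C).ncard → False := by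
    intro n
    induction n with
    | zero =>
      intro C hC h1 h2 hcard hlt2
      have hCBfin : (C \ B).Finite := (hAf.subset diff_subset).subset h1
      have hCB : C \ B = ∅ := (Set.ncard_eq_zero hCBfin).1 hcard
      have hsub : C ⊆ B := Set.diff_eq_empty.1 hCB
      obtain ⟨j, hj⟩ : (B \ C).Nonempty :=
        Set.nonempty_of_ncard_ne_zero (by omega)
      exact not_ssubset hb.toIsUncondBasis hB hC hsub
        (fun h => hj.2 (h ▸ hj.1))
    | succ n ih =>
      intro C hC h1 h2 hcard hlt2
      have hCBfin : (C \ B).Finite := (hAf.subset diff_subset).subset h1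
      have hBCfin : (B \ C).Finite := hBf.subset diff_subset
      obtain ⟨i, hi⟩ : (C \ B).Nonempty :=
        Set.nonempty_of_ncard_ne_zero (by omega)
      obtain ⟨j, hj⟩ : (B \ C).Nonempty :=
        Set.nonempty_of_ncard_ne_zero (by omega)
      have hiAB : i ∈ A \ B := h1 hi
      have hjBA : j ∈ B \ A := h2 hj
      have habs : |f i x| = |f j x| := hconst i hiAB j hjBA
      set C' := insert j (C \ {i}) with hC'
      have hnorm : ‖basisProj e f C' x‖ = ‖x‖ :=
        (norm_swap_eq hb hi.1 hj.2 habs).trans hC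
      have hC'B : C' \ B = (C \ B) \ {i} := by
        ext k
        simp only [hC', Set.mem_diff, Set.mem_insert_iff, Set.mem_singleton_iff]
        constructor
        · rintro ⟨h | ⟨hkC, hki⟩, hkB⟩
          · exact absurd (h ▸ hj.1) hkB
          · exact ⟨⟨hkC, hkB⟩, hki⟩
        · rintro ⟨⟨hkC, hkB⟩, hki⟩
          exact ⟨Or.inr ⟨hkC, hki⟩, hkB⟩
      have hBC' : B \ C' = (B \ C) \ {j} := by
        ext k
        simp only [hC', Set.mem_diff, Set.mem_insert_iff, Set.mem_singleton_iff, not_or]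
        constructor
        · rintro ⟨hkB, hkj, hk2⟩
          refine ⟨⟨hkB, fun hkC => ?_⟩, hkj⟩
          exact hk2 ⟨hkC, fun hki => hiAB.2 (hki ▸ hkB)⟩
        · rintro ⟨⟨hkB, hkC⟩, hkj⟩
          exact ⟨hkB, hkj, fun h => hkC h.1⟩
      refine ih C' hnorm ?_ ?_ ?_ ?_
      · rw [hC'B]; exact (diff_subset.trans h1)
      · rw [hBC']; exact (diff_subset.trans h2)
      · rw [hC'B, Set.ncard_diff_singleton_of_mem hi, hcard]; omega
      · rw [hBC', Set.ncard_diff_singleton_of_mem hj]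
        omega
  exact main (A \ B).ncard A hA.1 subset_rfl subset_rfl rfl hlt

end MsetAux

open MsetAux

/-- Let `x` be in the unit sphere of a Banach space with a normalized 1-symmetric basis.
(1) If `M(x)` contains an infinite set then `M(x) = {supp x}`;
(2) if every member of `M(x)` is finite, then any `A, B ∈ M(x)` have the same cardinality
and `i ↦ |f i x|` is constant on the symmetric difference `A ∆ B`. -/
theorem Mset_of_symmetric_basis [CompleteSpace X] (e : ℕ → X) (f : ℕ → X →L[ℝ] ℝ)
    (hb : IsSymmetricBasis e f) (x : X) (hx : ‖x‖ = 1) :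
    ((∃ A ∈ Mset e f x, A.Infinite) → Mset e f x = {{i : ℕ | f i x ≠ 0}}) ∧
    ((∀ A ∈ Mset e f x, A.Finite) → ∀ A ∈ Mset e f x, ∀ B ∈ Mset e f x,
      A.ncard = B.ncard ∧ ∀ i ∈ symmDiff A B, ∀ j ∈ symmDiff A B, |f i x| = |f j x|) := by
  have hsupp_sub : ∀ C ∈ Mset e f x, C ⊆ {i : ℕ | f i x ≠ 0} := fun C hC i hi =>
    mem_support_of_mem hb.toIsUncondBasis hC hi
  constructor
  · rintro ⟨A, hA, hAinf⟩
    have hAsupp : A = {i : ℕ | f i x ≠ 0} := by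
      refine subset_antisymm (hsupp_sub A hA) ?_
      intro j hj
      by_contra hjA
      have hfj : f j x ≠ 0 := hj
      -- the set of coefficients at least |f j x| in absolute value is finite
      have htend : Filter.Tendsto (fun i => ‖f i x • e i‖) Filter.cofinite (nhds 0) := by
        have := (hb.expand x).summable.tendsto_cofinite_zero
        simpa using this.norm
      have hev : ∀ᶠ i in Filter.cofinite, ‖f i x • e i‖ < |f j x| :=
        htend.eventually_lt_const (abs_pos.2 hfj)
      have hfin : {i : ℕ | ¬ ‖f i x • e i‖ < |f j x|}.Finite :=
        Filter.eventually_cofinite.1 hev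
      obtain ⟨i, hiA, hismall⟩ : ∃ i, i ∈ A ∧ ‖f i x • e i‖ < |f j x| := by
        obtain ⟨i, hi⟩ := (hAinf.diff hfin).nonempty
        exact ⟨i, hi.1, not_not.1 hi.2⟩
      have hismall' : |f i x| < |f j x| := by
        rwa [norm_smul, Real.norm_eq_abs, hb.norm_e i, mul_one] at hismall
      have := abs_coef_le hb hA hiA hjA
      linarith
    have hsupp_mem : {i : ℕ | f i x ≠ 0} ∈ Mset e f x := hAsupp ▸ hA
    ext B
    simp only [Set.mem_singleton_iff]
    constructor
    · intro hBM
      by_contra hne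
      exact not_ssubset hb.toIsUncondBasis hsupp_mem hBM.1 (hsupp_sub B hBM) hne
    · intro h
      exact h ▸ hsupp_mem
  · intro hfin A hA B hB
    have hAf := hfin A hA
    have hBf := hfin B hB
    have hcardeq : (A \ B).ncard = (B \ A).ncard :=
      le_antisymm (card_diff_le hb hB hA hBf hAf) (card_diff_le hb hA hB hAf hBf)
    constructor
    · have h1 : A.ncard = (A \ B).ncard + (A ∩ B).ncard := by
        rw [← Set.ncard_union_eq Set.disjoint_sdiff_inter
          (hAf.subset Set.diff_subset) (hAf.subset Set.inter_subset_left),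
          Set.diff_union_inter]
      have h2 : B.ncard = (B \ A).ncard + (B ∩ A).ncard := by
        rw [← Set.ncard_union_eq Set.disjoint_sdiff_inter
          (hBf.subset Set.diff_subset) (hBf.subset Set.inter_subset_left),
          Set.diff_union_inter]
      rw [h1, h2, hcardeq, Set.inter_comm]
    · by_cases hAB : A = B
      · subst hAB
        intro i hi
        rw [symmDiff_self] at hi
        exact absurd hi (by simp [Set.bot_eq_empty])
      · have hconst : ∀ i ∈ A \ B, ∀ j ∈ B \ A, |f i x| = |f j x| := fun i hi j hj =>
          le_antisymm (abs_coef_le hb hB hj.1 hi.2) (abs_coef_le hb hA hi.1 hj.2)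
        have hABne : (A \ B).Nonempty := by
          rw [Set.nonempty_iff_ne_empty]
          intro h
          exact not_ssubset hb.toIsUncondBasis hB hA.1 (Set.diff_eq_empty.1 h) hAB
        have hBAne : (B \ A).Nonempty := by
          rw [Set.nonempty_iff_ne_empty]
          intro h
          exact not_ssubset hb.toIsUncondBasis hA hB.1 (Set.diff_eq_empty.1 h)
            (Ne.symm hAB)
        obtain ⟨k, hk⟩ := hABne
        obtain ⟨l, hl⟩ := hBAne
        intro i hi j hj
        rw [Set.mem_symmDiff] at hi hj
        rcases hi with hi | hi <;> rcases hj with hj | hj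
        · calc |f i x| = |f l x| := hconst i ⟨hi.1, hi.2⟩ l hl
            _ = |f j x| := (hconst j ⟨hj.1, hj.2⟩ l hl).symm
        · exact hconst i ⟨hi.1, hi.2⟩ j ⟨hj.1, hj.2⟩
        · exact (hconst j ⟨hj.1, hj.2⟩ i ⟨hi.1, hi.2⟩).symm
        · calc |f i x| = |f k x| := (hconst k hk i ⟨hi.1, hi.2⟩).symm
            _ = |f j x| := hconst k hk j ⟨hj.1, hj.2⟩
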